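/- Let (cₙ) be a decreasing sequence of reals converging to c₀, and let zₙ be a positive solution of żₙ = cₙ g(u) − f(u) − h(u)/zₙ^α on (0,1), such that zₙ(u) → z₀(u) pointwise on (0,1). Then z₀(u) > 0 for all u ∈ (0,1) and z₀ is a C¹ solution of ż₀ = c₀ g(u) − f(u) − h(u)/z₀^α on (0,1). -/

import Mathlib

open Set Filter Topology Real

/-- Equi-lower-boundedness of positive solutions on compact subintervals. -/
lemma equi_lower (α : ℝ) (hα : 0 < α) (f g h : ℝ → ℝ)
    (hh : ContinuousOn h (Icc 0 1)) (hhpos : ∀ u ∈ Ioo (0:ℝ) 1, 0 < h u)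
    (c : ℕ → ℝ)
    (z : ℕ → ℝ → ℝ)
    (hz : ∀ n, ∀ u ∈ Ioo (0:ℝ) 1,
      HasDerivAt (z n) (c n * g u - f u - h u / z n u ^ α) u)
    (hzpos : ∀ n, ∀ u ∈ Ioo (0:ℝ) 1, 0 < z n u)
    (M : ℝ) (hM0 : 0 < M) (hM : ∀ n, ∀ u ∈ Icc (0:ℝ) 1, c n * g u - f u ≤ M)
    (a b' : ℝ) (ha : 0 < a) (hab : a ≤ b') (hb' : b' < 1) :
    ∃ δ > 0, ∀ n, ∀ u ∈ Icc a b', δ ≤ z n u := by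
  set b : ℝ := (1 + b') / 2 with hbdef
  have hb'b : b' < b := by rw [hbdef]; linarith
  have hb1 : b < 1 := by rw [hbdef]; linarith
  have hab2 : a ≤ b := hab.trans hb'b.le
  have hsub : Icc a b ⊆ Ioo 0 1 := fun x hx => ⟨lt_of_lt_of_le ha hx.1, lt_of_le_of_lt hx.2 hb1⟩
  -- min of h on [a,b]
  obtain ⟨x₀, hx₀, hmin⟩ := (isCompact_Icc).exists_isMinOn (nonempty_Icc.mpr hab2)
    (hh.mono (fun x hx => ⟨(hsub hx).1.le, (hsub hx).2.le⟩))
  set m : ℝ := h x₀ with hmdef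
  have hm0 : 0 < m := hhpos x₀ (hsub hx₀)
  have hmle : ∀ x ∈ Icc a b, m ≤ h x := fun x hx => hmin hx
  set L : ℝ := b - b' with hLdef
  have hL0 : 0 < L := by rw [hLdef]; linarith
  set K : ℝ := 1 / L with hKdef
  have hK0 : 0 < K := by positivity
  set R : ℝ := m / (M + K) with hRdef
  have hR0 : 0 < R := by positivity
  set δ : ℝ := min 1 (min (K * L) (R ^ α⁻¹)) with hδdef
  have hδ0 : 0 < δ := by
    have : (0:ℝ) < R ^ α⁻¹ := Real.rpow_pos_of_pos hR0 _
    simp only [hδdef, lt_min_iff]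
    exact ⟨one_pos, by positivity, this⟩
  have hδ1 : δ ≤ 1 := min_le_left _ _
  have hδKL : δ ≤ K * L := (min_le_right _ _).trans (min_le_left _ _)
  have hδα : δ ^ α ≤ R := by
    have h1 : δ ≤ R ^ α⁻¹ := (min_le_right _ _).trans (min_le_right _ _)
    calc δ ^ α ≤ (R ^ α⁻¹) ^ α := Real.rpow_le_rpow hδ0.le h1 hα.le
    _ = R := Real.rpow_inv_rpow hR0.le hα.ne'
  have hδα0 : 0 < δ ^ α := Real.rpow_pos_of_pos hδ0 _
  have hMK : M + K ≤ m / δ ^ α := by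
    have h1 : m / R ≤ m / δ ^ α := div_le_div_of_nonneg_left hm0.le hδα0 hδα
    have h2 : m / R = M + K := by
      rw [hRdef]
      field_simp
    linarith
  refine ⟨δ, hδ0, ?_⟩
  intro n u₀ hu₀
  by_contra hcon
  push_neg at hcon
  have hu₀ab : u₀ ∈ Icc a b := ⟨hu₀.1, hu₀.2.trans hb'b.le⟩
  have hu₀01 : u₀ ∈ Ioo (0:ℝ) 1 := hsub hu₀ab
  -- MVT-type key estimate
  have key : ∀ s : ℝ, u₀ < s → s ≤ b → (∀ u ∈ Ico u₀ s, z n u < δ) →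
      z n s ≤ z n u₀ - K * (s - u₀) := by
    intro s hu₀s hsb hlt
    have hsubI : Icc u₀ s ⊆ Ioo 0 1 := fun x hx =>
      hsub ⟨hu₀ab.1.trans hx.1, hx.2.trans hsb⟩
    have hsubab : Icc u₀ s ⊆ Icc a b := fun x hx => ⟨hu₀ab.1.trans hx.1, hx.2.trans hsb⟩
    set φ : ℝ → ℝ := fun u => z n u + K * u with hφdef
    have hφd : ∀ x ∈ Ioo u₀ s, HasDerivAt φ
        ((c n * g x - f x - h x / z n x ^ α) + K * 1) x := by
      intro x hx
      exact ((hz n x (hsubI (Ioo_subset_Icc_self hx)))).add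
        ((hasDerivAt_id x).const_mul K)
    have hanti : AntitoneOn φ (Icc u₀ s) := by
      apply antitoneOn_of_deriv_nonpos (convex_Icc u₀ s)
      · intro x hx
        exact (((hz n x (hsubI hx)).continuousAt).add
          ((continuous_const.mul continuous_id).continuousAt)).continuousWithinAt
      · rw [interior_Icc]
        intro x hx
        exact ((hφd x hx).differentiableAt).differentiableWithinAt
      · rw [interior_Icc]
        intro x hx
        rw [(hφd x hx).deriv]
        have hxab : x ∈ Icc a b := hsubab (Ioo_subset_Icc_self hx)
        have hx01 : x ∈ Ioo (0:ℝ) 1 := hsubI (Ioo_subset_Icc_self hx)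
        have hzx : 0 < z n x := hzpos n x hx01
        have hzxδ : z n x < δ := hlt x ⟨hx.1.le, hx.2⟩
        have hzα : z n x ^ α ≤ δ ^ α := Real.rpow_le_rpow hzx.le hzxδ.le hα.le
        have hzα0 : 0 < z n x ^ α := Real.rpow_pos_of_pos hzx _
        have hdiv : M + K ≤ h x / z n x ^ α := by
          refine hMK.trans ?_
          exact div_le_div₀ (hm0.le.trans (hmle x hxab)) (hmle x hxab) hzα0 hzα
        have hfg : c n * g x - f x ≤ M :=
          hM n x ⟨hx01.1.le, hx01.2.le⟩
        linarith
    have := hanti (left_mem_Icc.mpr hu₀s.le) (right_mem_Icc.mpr hu₀s.le) hu₀s.le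
    simp only [hφdef] at this
    linarith
  -- set where z n ≥ δ on [u₀, b]
  set A : Set ℝ := {u | u ∈ Icc u₀ b ∧ δ ≤ z n u} with hAdef
  have hAclosed : IsClosed A := by
    have hcz : ContinuousOn (z n) (Icc u₀ b) := fun x hx =>
      ((hz n x (hsub ⟨hu₀ab.1.trans hx.1, hx.2⟩)).continuousAt).continuousWithinAt
    have : A = Icc u₀ b ∩ (z n) ⁻¹' (Ici δ) := by
      ext x; simp [hAdef, mem_Ici, and_comm]
    rw [this]
    exact hcz.preimage_isClosed_of_isClosed isClosed_Icc isClosed_Ici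
  by_cases hA : A.Nonempty
  · -- t = inf A, contradiction
    have hAbdd : BddBelow A := ⟨u₀, fun x hx => hx.1.1⟩
    set t : ℝ := sInf A with htdef
    have htA : t ∈ A := hAclosed.csInf_mem hA hAbdd
    have hu₀t : u₀ < t := by
      rcases lt_or_eq_of_le htA.1.1 with h' | h'
      · exact h'
      · exact absurd (h' ▸ htA.2) (not_le.mpr hcon)
    have hltall : ∀ u ∈ Ico u₀ t, z n u < δ := by
      intro u hu
      by_contra hge
      have huA : u ∈ A := ⟨⟨hu.1, hu.2.le.trans htA.1.2⟩, not_lt.mp hge⟩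
      exact absurd (csInf_le hAbdd huA) (not_le.mpr hu.2)
    have hkey := key t hu₀t htA.1.2 hltall
    have := mul_pos hK0 (sub_pos.mpr hu₀t)
    linarith [htA.2]
  · -- A empty
    have hltall : ∀ u ∈ Ico u₀ b, z n u < δ := by
      intro u hu
      by_contra hge
      exact hA ⟨u, ⟨hu.1, hu.2.le⟩, not_lt.mp hge⟩
    have hkey := key b (lt_of_le_of_lt hu₀.2 hb'b) le_rfl hltall
    have hzb : 0 < z n b := hzpos n b (hsub ⟨hab2, le_rfl⟩)
    have hbu₀ : L ≤ b - u₀ := by rw [hLdef]; linarith [hu₀.2]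
    have : K * L ≤ K * (b - u₀) := by
      exact mul_le_mul_of_nonneg_left hbu₀ hK0.le
    have hKL : K * L = 1 := by rw [hKdef]; field_simp
    linarith [hcon, hzb]  -- z n b ≤ z n u₀ - K(b-u₀) ≤ δ - 1 ≤ 0

/-- Stability under pointwise limits: if `cₙ ↓ c₀` and `zₙ` are positive
solutions on `(0,1)` for speed `cₙ` converging pointwise to `z₀`, then `z₀` is
positive and solves the equation for speed `c₀`. -/
theorem stmt_13 (α : ℝ) (hα : 0 < α) (f g h : ℝ → ℝ)
    (hf : ContinuousOn f (Icc 0 1)) (hg : ContinuousOn g (Icc 0 1))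
    (hh : ContinuousOn h (Icc 0 1))
    (hh0 : h 0 = 0) (hh1 : h 1 = 0) (hhpos : ∀ u ∈ Ioo (0:ℝ) 1, 0 < h u)
    (c : ℕ → ℝ) (c₀ : ℝ) (hcmono : Antitone c) (hclim : Tendsto c atTop (𝓝 c₀))
    (z : ℕ → ℝ → ℝ) (z₀ : ℝ → ℝ)
    (hz : ∀ n, ∀ u ∈ Ioo (0:ℝ) 1,
      HasDerivAt (z n) (c n * g u - f u - h u / z n u ^ α) u)
    (hzpos : ∀ n, ∀ u ∈ Ioo (0:ℝ) 1, 0 < z n u)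
    (hconv : ∀ u ∈ Ioo (0:ℝ) 1, Tendsto (fun n => z n u) atTop (𝓝 (z₀ u))) :
    (∀ u ∈ Ioo (0:ℝ) 1, 0 < z₀ u) ∧
    (∀ u ∈ Ioo (0:ℝ) 1, HasDerivAt z₀ (c₀ * g u - f u - h u / z₀ u ^ α) u) := by
  -- global bounds
  obtain ⟨G, hG⟩ := isCompact_Icc.exists_bound_of_continuousOn hg
  obtain ⟨F, hF⟩ := isCompact_Icc.exists_bound_of_continuousOn hf
  obtain ⟨H, hH⟩ := isCompact_Icc.exists_bound_of_continuousOn hh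
  have h01 : (0:ℝ) ∈ Icc (0:ℝ) 1 := by norm_num
  have hG0 : 0 ≤ G := le_trans (norm_nonneg _) (hG 0 h01)
  have hF0 : 0 ≤ F := le_trans (norm_nonneg _) (hF 0 h01)
  have hH0 : 0 ≤ H := le_trans (norm_nonneg _) (hH 0 h01)
  set Cb : ℝ := max |c 0| |c₀| with hCbdef
  have hCb0 : 0 ≤ Cb := le_trans (abs_nonneg _) (le_max_left _ _)
  have hcb : ∀ n, |c n| ≤ Cb := by
    intro n
    rw [abs_le]
    constructor
    · have h1 : c₀ ≤ c n := hcmono.le_of_tendsto hclim n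
      have h2 : -|c₀| ≤ c₀ := neg_abs_le _
      have h3 : |c₀| ≤ Cb := le_max_right _ _
      linarith
    · exact (hcmono (Nat.zero_le n)).trans ((le_abs_self _).trans (le_max_left _ _))
  set M : ℝ := Cb * G + F + 1 with hMdef
  have hM0 : 0 < M := by positivity
  have hMb : ∀ n, ∀ u ∈ Icc (0:ℝ) 1, |c n * g u - f u| ≤ M := by
    intro n u hu
    have h1 : |g u| ≤ G := hG u hu
    have h2 : |f u| ≤ F := hF u hu
    have h3 : |c n * g u| ≤ Cb * G := by
      rw [abs_mul]
      exact mul_le_mul (hcb n) h1 (abs_nonneg _) hCb0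
    have h4 : |c n * g u - f u| ≤ |c n * g u| + |f u| := abs_sub (c n * g u) (f u)
    rw [hMdef]; linarith
  -- uniform lower bounds, also for the limit
  have hlow : ∀ a b' : ℝ, 0 < a → a ≤ b' → b' < 1 → ∃ δ > 0,
      (∀ n, ∀ u ∈ Icc a b', δ ≤ z n u) ∧ (∀ u ∈ Icc a b', δ ≤ z₀ u) := by
    intro a b' ha hab hb'
    obtain ⟨δ, hδ0, hδ⟩ := equi_lower α hα f g h hh hhpos c z hz hzpos M hM0
      (fun n u hu => (abs_le.mp (hMb n u hu)).2) a b' ha hab hb'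
    refine ⟨δ, hδ0, hδ, fun u hu => ?_⟩
    have husub : u ∈ Ioo (0:ℝ) 1 := ⟨lt_of_lt_of_le ha hu.1, lt_of_le_of_lt hu.2 hb'⟩
    exact ge_of_tendsto (hconv u husub) (Eventually.of_forall fun n => hδ n u hu)
  set Fn : ℕ → ℝ → ℝ := fun n t => c n * g t - f t - h t / z n t ^ α with hFndef
  set F0 : ℝ → ℝ := fun t => c₀ * g t - f t - h t / z₀ t ^ α with hF0def
  have part1 : ∀ u ∈ Ioo (0:ℝ) 1, 0 < z₀ u := by
    intro u hu
    obtain ⟨δ, hδ0, _, hδz⟩ := hlow u u hu.1 le_rfl hu.2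
    exact lt_of_lt_of_le hδ0 (hδz u ⟨le_rfl, le_rfl⟩)
  have hIooIcc : Ioo (0:ℝ) 1 ⊆ Icc 0 1 := Ioo_subset_Icc_self
  have hFncont : ∀ n, ContinuousOn (Fn n) (Ioo (0:ℝ) 1) := by
    intro n
    have hzc : ContinuousOn (z n) (Ioo (0:ℝ) 1) := fun x hx =>
      ((hz n x hx).continuousAt).continuousWithinAt
    have hzα : ContinuousOn (fun t => z n t ^ α) (Ioo (0:ℝ) 1) :=
      hzc.rpow_const (fun x hx => Or.inl (hzpos n x hx).ne')
    exact ((continuousOn_const.mul (hg.mono hIooIcc)).sub (hf.mono hIooIcc)).sub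
      ((hh.mono hIooIcc).div hzα
        (fun x hx => (Real.rpow_pos_of_pos (hzpos n x hx) α).ne'))
  have hFTC : ∀ n, ∀ v ∈ Ioo (0:ℝ) 1, ∀ u ∈ Ioo (0:ℝ) 1,
      ∫ t in v..u, Fn n t = z n u - z n v := by
    intro n v hv u hu
    have huIcc : uIcc v u ⊆ Ioo (0:ℝ) 1 := (ordConnected_Ioo).uIcc_subset hv hu
    exact intervalIntegral.integral_eq_sub_of_hasDerivAt
      (fun x hx => hz n x (huIcc hx)) (((hFncont n).mono huIcc).intervalIntegrable)
  have hFb : ∀ (δ : ℝ), 0 < δ → ∀ n, ∀ x ∈ Ioo (0:ℝ) 1, δ ≤ z n x →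
      ‖Fn n x‖ ≤ M + H / δ ^ α := by
    intro δ hδ0 n x hx hδz
    have hx01 : x ∈ Icc (0:ℝ) 1 := hIooIcc hx
    have hzx : 0 < z n x := hzpos n x hx
    have hδα0 : 0 < δ ^ α := Real.rpow_pos_of_pos hδ0 _
    have hzα : δ ^ α ≤ z n x ^ α := Real.rpow_le_rpow hδ0.le hδz hα.le
    have hhx : 0 ≤ h x := (hhpos x hx).le
    have hd : h x / z n x ^ α ≤ H / δ ^ α :=
      div_le_div₀ hH0 ((le_abs_self _).trans (hH x hx01)) hδα0 hzα
    have hd0 : 0 ≤ h x / z n x ^ α := by positivity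
    have h1 : |c n * g x - f x| ≤ M := hMb n x hx01
    rw [Real.norm_eq_abs, hFndef]
    calc |c n * g x - f x - h x / z n x ^ α|
        ≤ |c n * g x - f x| + |h x / z n x ^ α| := abs_sub _ _
    _ ≤ M + H / δ ^ α := by rw [abs_of_nonneg hd0]; linarith
  -- the integral identity for the limit
  have hkey : ∀ v ∈ Ioo (0:ℝ) 1, ∀ u ∈ Ioo (0:ℝ) 1,
      z₀ u - z₀ v = ∫ t in v..u, F0 t := by
    intro v hv u hu
    have huIcc : uIcc v u ⊆ Ioo (0:ℝ) 1 := (ordConnected_Ioo).uIcc_subset hv hu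
    obtain ⟨δ, hδ0, hδn, hδz⟩ := hlow (min v u) (max v u) (lt_min hv.1 hu.1)
      min_le_max (max_lt hv.2 hu.2)
    have huIcc' : uIcc v u = Icc (min v u) (max v u) := rfl
    have hmem : ∀ x ∈ uIoc v u, x ∈ Icc (min v u) (max v u) := by
      intro x hx
      exact huIcc' ▸ uIoc_subset_uIcc hx
    have hTend := intervalIntegral.tendsto_integral_filter_of_dominated_convergence
      (μ := MeasureTheory.volume) (a := v) (b := u) (F := Fn) (f := F0)
      (fun _ => M + H / δ ^ α)
      (Eventually.of_forall fun n =>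
        (((hFncont n).mono (fun x hx => huIcc (uIoc_subset_uIcc hx))).aestronglyMeasurable
          measurableSet_uIoc))
      (Eventually.of_forall fun n => Eventually.of_forall fun x hx =>
        hFb δ hδ0 n x (huIcc (uIoc_subset_uIcc hx)) (hδn n x (hmem x hx)))
      intervalIntegrable_const
      (Eventually.of_forall fun x hx => by
        have hx01 : x ∈ Ioo (0:ℝ) 1 := huIcc (uIoc_subset_uIcc hx)
        have hz0x : 0 < z₀ x := part1 x hx01
        have h1 : Tendsto (fun n => c n * g x - f x) atTop (𝓝 (c₀ * g x - f x)) :=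
          (hclim.mul_const (g x)).sub tendsto_const_nhds
        have h2 : Tendsto (fun n => z n x ^ α) atTop (𝓝 (z₀ x ^ α)) :=
          (hconv x hx01).rpow_const (Or.inl hz0x.ne')
        have h3 : Tendsto (fun n => h x / z n x ^ α) atTop (𝓝 (h x / z₀ x ^ α)) :=
          tendsto_const_nhds.div h2 (Real.rpow_pos_of_pos hz0x α).ne'
        exact h1.sub h3)
    have hTend2 : Tendsto (fun n => ∫ t in v..u, Fn n t) atTop (𝓝 (z₀ u - z₀ v)) := by
      have : (fun n => ∫ t in v..u, Fn n t) = fun n => z n u - z n v :=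
        funext fun n => hFTC n v hv u hu
      rw [this]
      exact (hconv u hu).sub (hconv v hv)
    exact tendsto_nhds_unique hTend2 hTend
  -- continuity of z₀ on (0,1)
  have hz0cont : ∀ x ∈ Ioo (0:ℝ) 1, ContinuousAt z₀ x := by
    intro x hx
    set a : ℝ := x / 2 with hadef
    set b' : ℝ := (1 + x) / 2 with hb'def
    have ha : 0 < a := by rw [hadef]; linarith [hx.1]
    have hax : a < x := by rw [hadef]; linarith [hx.1]
    have hxb : x < b' := by rw [hb'def]; linarith [hx.2]
    have hb' : b' < 1 := by rw [hb'def]; linarith [hx.2]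
    obtain ⟨δ, hδ0, hδn, hδz⟩ := hlow a b' ha (hax.trans hxb).le hb'
    set C : ℝ := M + H / δ ^ α with hCdef
    have hC0 : 0 ≤ C := by
      have : 0 < δ ^ α := Real.rpow_pos_of_pos hδ0 _
      rw [hCdef]; positivity
    have hsubI : Icc a b' ⊆ Ioo (0:ℝ) 1 := fun y hy =>
      ⟨lt_of_lt_of_le ha hy.1, lt_of_le_of_lt hy.2 hb'⟩
    have hlipn : ∀ u ∈ Icc a b', ∀ w ∈ Icc a b', |z₀ u - z₀ w| ≤ C * |u - w| := by
      intro u hu w hw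
      have hu01 := hsubI hu
      have hw01 := hsubI hw
      have hn : ∀ n, |z n u - z n w| ≤ C * |u - w| := by
        intro n
        rw [← hFTC n w hw01 u hu01]
        have hbd : ∀ y ∈ uIoc w u, ‖Fn n y‖ ≤ C := by
          intro y hy
          have hy' : y ∈ Icc a b' := (ordConnected_Icc).uIcc_subset hw hu (uIoc_subset_uIcc hy)
          exact hFb δ hδ0 n y (hsubI hy') (hδn n y hy')
        rw [← Real.norm_eq_abs]
        exact intervalIntegral.norm_integral_le_of_norm_le_const hbd
      exact le_of_tendsto (((hconv u hu01).sub (hconv w hw01)).abs)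
        (Eventually.of_forall hn)
    have hlip : LipschitzOnWith (Real.toNNReal C) z₀ (Icc a b') := by
      apply LipschitzOnWith.of_dist_le_mul
      intro p hp q hq
      rw [Real.dist_eq, Real.dist_eq]
      exact le_trans (hlipn p hp q hq)
        (mul_le_mul_of_nonneg_right (Real.le_coe_toNNReal C) (abs_nonneg _))
    exact hlip.continuousOn.continuousAt (Icc_mem_nhds hax hxb)
  -- continuity of F0 on (0,1)
  have hF0cont : ContinuousOn F0 (Ioo (0:ℝ) 1) := by
    have hz0c : ContinuousOn z₀ (Ioo (0:ℝ) 1) := fun x hx =>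
      (hz0cont x hx).continuousWithinAt
    have hzα : ContinuousOn (fun t => z₀ t ^ α) (Ioo (0:ℝ) 1) :=
      hz0c.rpow_const (fun x hx => Or.inl (part1 x hx).ne')
    exact ((continuousOn_const.mul (hg.mono hIooIcc)).sub (hf.mono hIooIcc)).sub
      ((hh.mono hIooIcc).div hzα
        (fun x hx => (Real.rpow_pos_of_pos (part1 x hx) α).ne'))
  refine ⟨part1, ?_⟩
  intro u hu
  have hψ : HasDerivAt (fun w => z₀ u + ∫ t in u..w, F0 t) (F0 u) u := by
    have := intervalIntegral.integral_hasDerivAt_right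
      (IntervalIntegrable.refl (f := F0) (a := u) (μ := MeasureTheory.volume))
      (hF0cont.stronglyMeasurableAtFilter isOpen_Ioo u hu)
      ((hF0cont.continuousAt (isOpen_Ioo.mem_nhds hu)))
    exact this.const_add (z₀ u)
  have hEq : z₀ =ᶠ[𝓝 u] fun w => z₀ u + ∫ t in u..w, F0 t := by
    filter_upwards [isOpen_Ioo.mem_nhds hu] with w hw
    have := hkey u hu w hw
    linarith
  exact hψ.congr_of_eventuallyEq hEq
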